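/- Let ψ : ℝ → ℝ be an even integrable function with ∫_ℝ ψ(t) dt = 0, and let F(u) = ∫_{−∞}^{u} ψ(t) dt (so F equals the convolution of the step function 1_{[0,∞)} with ψ). Assume F ∈ L²(ℝ). Then for all γ, γ' ∈ {−1, +1}, ∫_ℝ σ(γ F(t)) σ(γ' F(t)) dt = ∫_ℝ σ(−γ F(t)) σ(−γ' F(t)) dt; that is, an even wavelet cannot distinguish the step function from its negative via ReLU correlations. -/

import Mathlib

open MeasureTheory

/-- An even integrable zero-mean wavelet cannot distinguish the step function
from its negative via ReLU correlations: with `F u = ∫_{-∞}^u ψ`, the ReLU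
correlations of `F` are invariant under `(γ, γ') ↦ (-γ, -γ')`. -/
theorem even_wavelet_step_relu_correlation_sign_invariant
    (ψ : ℝ → ℝ) (heven : ∀ t : ℝ, ψ (-t) = ψ t)
    (hint : Integrable ψ) (hzero : (∫ t : ℝ, ψ t) = 0)
    (F : ℝ → ℝ) (hF : ∀ u : ℝ, F u = ∫ t in Set.Iic u, ψ t)
    (hL2 : MemLp F 2 (volume : Measure ℝ)) :
    ∀ γ ∈ ({-1, 1} : Set ℝ), ∀ γ' ∈ ({-1, 1} : Set ℝ),
      (∫ t : ℝ, max 0 (γ * F t) * max 0 (γ' * F t))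
        = ∫ t : ℝ, max 0 (-γ * F t) * max 0 (-γ' * F t) := by
  have hodd : ∀ u : ℝ, F (-u) = -F u := by
    intro u
    have h1 : F (-u) = ∫ t in Set.Ioi u, ψ t := by
      have h := integral_comp_neg_Iic (-u) ψ
      rw [neg_neg] at h
      rw [hF, ← h]
      exact setIntegral_congr_fun measurableSet_Iic fun t _ => (heven t).symm
    have h2 : (∫ t in Set.Iic u, ψ t) + ∫ t in Set.Ioi u, ψ t = ∫ t : ℝ, ψ t :=
      intervalIntegral.integral_Iic_add_Ioi hint.integrableOn hint.integrableOn
    rw [h1, hF]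
    linarith [h2, hzero]
  intro γ _ γ' _
  calc (∫ t : ℝ, max 0 (γ * F t) * max 0 (γ' * F t))
      = ∫ t : ℝ, max 0 (γ * F (-t)) * max 0 (γ' * F (-t)) := by
        exact (integral_neg_eq_self (fun t => max 0 (γ * F t) * max 0 (γ' * F t)) volume).symm
    _ = ∫ t : ℝ, max 0 (-γ * F t) * max 0 (-γ' * F t) := by
        congr 1; funext t; rw [hodd t]; ring_nf
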